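/- arXiv:2410.16468 — 3 statements merged into one kernel-verified Lean document; each statement's English description precedes it below -/
import Mathlib

section
/- For all s, t, r > 0, the integral ∫_{ℝⁿ} ( G_{3t/4} ∗ (G_{t/4+r})² )^{1/2}(x) dx is bounded by C·((7t+4r)/(2t+8r))^{n/4} for a constant C depending only on n; in particular this integral is bounded uniformly in t and r. -/
open MeasureTheory Metric Real

/-- The Gaussian heat kernel `G_t(x) = (4πt)^{-n/2} exp(-|x|²/(4t))` on ℝⁿ. -/
noncomputable def heatKernel (n : ℕ) (t : ℝ) (x : EuclideanSpace ℝ (Fin n)) : ℝ :=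
  (4 * π * t) ^ (-(n : ℝ) / 2) * Real.exp (-‖x‖ ^ 2 / (4 * t))

lemma gauss_int (n : ℕ) {b : ℝ} (hb : 0 < b) :
    ∫ v : EuclideanSpace ℝ (Fin n), Real.exp (-b * ‖v‖ ^ 2) = (π / b) ^ ((n : ℝ) / 2) := by
  rw [GaussianFourier.integral_rexp_neg_mul_sq_norm hb, finrank_euclideanSpace_fin]

lemma sqrt_exp' (u : ℝ) : Real.sqrt (Real.exp u) = Real.exp (u * (1 / 2)) := by
  rw [Real.sqrt_eq_rpow, ← Real.exp_mul]

lemma heatKernel_conv (n : ℕ) {a b : ℝ} (ha : 0 < a) (hb : 0 < b)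
    (x : EuclideanSpace ℝ (Fin n)) :
    ∫ y, heatKernel n a (x - y) * (heatKernel n b y) ^ 2
      = (4 * π * a) ^ (-(n : ℝ) / 2) * (4 * π * b) ^ (-(n : ℝ))
          * (π / ((2 * a + b) / (4 * a * b))) ^ ((n : ℝ) / 2)
          * Real.exp (-‖x‖ ^ 2 / (2 * (2 * a + b))) := by
  have hπ := Real.pi_pos
  set α : ℝ := (2 * a + b) / (4 * a * b) with hα
  have hαpos : 0 < α := by positivity
  have hab : (0:ℝ) < 2 * a + b := by linarith
  set c : ℝ := b / (2 * a + b) with hc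
  set μ : EuclideanSpace ℝ (Fin n) := c • x with hμ
  have hpt : ∀ y : EuclideanSpace ℝ (Fin n),
      heatKernel n a (x - y) * (heatKernel n b y) ^ 2
        = ((4 * π * a) ^ (-(n : ℝ) / 2) * (4 * π * b) ^ (-(n : ℝ))
            * Real.exp (-‖x‖ ^ 2 / (2 * (2 * a + b)))) * Real.exp (-α * ‖y - μ‖ ^ 2) := by
    intro y
    have hnorm1 : ‖x - y‖ ^ 2 = ‖x‖ ^ 2 - 2 * (inner ℝ x y : ℝ) + ‖y‖ ^ 2 :=
      norm_sub_sq_real x y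
    have hnorm2 : ‖y - μ‖ ^ 2 = ‖y‖ ^ 2 - 2 * (c * (inner ℝ x y : ℝ)) + c ^ 2 * ‖x‖ ^ 2 := by
      rw [hμ, norm_sub_sq_real, real_inner_smul_right, real_inner_comm, norm_smul]
      simp [mul_pow, sq_abs]
    have hexp : -‖x - y‖ ^ 2 / (4 * a) + (-‖y‖ ^ 2 / (4 * b) + -‖y‖ ^ 2 / (4 * b))
        = -‖x‖ ^ 2 / (2 * (2 * a + b)) + (-α * ‖y - μ‖ ^ 2) := by
      rw [hnorm1, hnorm2, hα, hc]
      field_simp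
      ring
    have hA2 : ((4 * π * b) ^ (-(n : ℝ) / 2)) ^ 2 = (4 * π * b) ^ (-(n : ℝ)) := by
      rw [← Real.rpow_natCast ((4 * π * b) ^ (-(n : ℝ) / 2)) 2,
        ← Real.rpow_mul (by positivity)]
      norm_num
    have hE : Real.exp (-‖y‖ ^ 2 / (4 * b)) ^ 2
        = Real.exp (-‖y‖ ^ 2 / (4 * b) + -‖y‖ ^ 2 / (4 * b)) := by
      rw [Real.exp_add, sq]
    unfold heatKernel
    rw [mul_pow, hA2, hE]
    calc (4 * π * a) ^ (-(n:ℝ) / 2) * Real.exp (-‖x - y‖ ^ 2 / (4 * a)) *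
          ((4 * π * b) ^ (-(n:ℝ)) * Real.exp (-‖y‖ ^ 2 / (4 * b) + -‖y‖ ^ 2 / (4 * b)))
        = ((4 * π * a) ^ (-(n:ℝ) / 2) * (4 * π * b) ^ (-(n:ℝ)))
            * Real.exp (-‖x - y‖ ^ 2 / (4 * a) + (-‖y‖ ^ 2 / (4 * b) + -‖y‖ ^ 2 / (4 * b))) := by
          simp only [Real.exp_add]; ring
      _ = ((4 * π * a) ^ (-(n:ℝ) / 2) * (4 * π * b) ^ (-(n:ℝ)))
            * Real.exp (-‖x‖ ^ 2 / (2 * (2 * a + b)) + (-α * ‖y - μ‖ ^ 2)) := by rw [hexp]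
      _ = _ := by simp only [Real.exp_add]; ring
  simp only [hpt]
  rw [MeasureTheory.integral_const_mul]
  rw [show (fun y : EuclideanSpace ℝ (Fin n) => Real.exp (-α * ‖y - μ‖ ^ 2))
      = fun y => (fun z : EuclideanSpace ℝ (Fin n) => Real.exp (-α * ‖z‖ ^ 2)) (y - μ)
      from rfl,
    MeasureTheory.integral_sub_right_eq_self (fun z : EuclideanSpace ℝ (Fin n) =>
      Real.exp (-α * ‖z‖ ^ 2)) μ, gauss_int n hαpos]
  ring

/-- for all `s, t, r > 0`,
`∫ (G_{3t/4} ∗ (G_{t/4+r})²)^{1/2}(x) dx ≤ C ((7t+4r)/(2t+8r))^{n/4}`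
with `C` depending only on `n`; in particular the integral is bounded uniformly in `t, r`. -/
theorem stmt2 (n : ℕ) (hn : 1 ≤ n) :
    ∃ C : ℝ, 0 < C ∧ ∀ s t r : ℝ, 0 < s → 0 < t → 0 < r →
      ∫ x : EuclideanSpace ℝ (Fin n),
          Real.sqrt (∫ y, heatKernel n (3 * t / 4) (x - y) * (heatKernel n (t / 4 + r) y) ^ 2)
        ≤ C * ((7 * t + 4 * r) / (2 * t + 8 * r)) ^ ((n : ℝ) / 4) := by
  have hπ := Real.pi_pos
  refine ⟨2 ^ ((n : ℝ) / 4), by positivity, fun s t r hs ht hr => ?_⟩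
  have ha : (0:ℝ) < 3 * t / 4 := by linarith
  have hb : (0:ℝ) < t / 4 + r := by linarith
  set a : ℝ := 3 * t / 4 with ha_def
  set b : ℝ := t / 4 + r with hb_def
  have hab : (0:ℝ) < 2 * a + b := by positivity
  set A : ℝ := 4 * π * a with hA_def
  set B : ℝ := 4 * π * b with hB_def
  set Cb : ℝ := π / ((2 * a + b) / (4 * a * b)) with hCb_def
  set β : ℝ := 1 / (4 * (2 * a + b)) with hβ_def
  set D : ℝ := π / β with hD_def
  set R : ℝ := (7 * t + 4 * r) / (2 * t + 8 * r) with hR_def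
  have hApos : 0 < A := by positivity
  have hBpos : 0 < B := by positivity
  have hCbpos : 0 < Cb := by rw [hCb_def]; positivity
  have hβpos : 0 < β := by rw [hβ_def]; positivity
  have hDpos : 0 < D := by rw [hD_def]; positivity
  have hRpos : 0 < R := by rw [hR_def]; positivity
  set K0 : ℝ := A ^ (-(n : ℝ) / 2) * B ^ (-(n : ℝ)) * Cb ^ ((n : ℝ) / 2) with hK0_def
  have hK0pos : 0 < K0 := by positivity
  have h1 : ∀ x : EuclideanSpace ℝ (Fin n),
      Real.sqrt (∫ y, heatKernel n a (x - y) * (heatKernel n b y) ^ 2)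
        = Real.sqrt K0 * Real.exp (-β * ‖x‖ ^ 2) := by
    intro x
    have harg : -‖x‖ ^ 2 / (2 * (2 * a + b)) * (1 / 2) = -β * ‖x‖ ^ 2 := by
      rw [hβ_def, div_mul_div_comm,
        show (2 * (2 * a + b)) * 2 = 4 * (2 * a + b) from by ring]
      ring
    rw [heatKernel_conv n ha hb x, ← hA_def, ← hB_def, ← hCb_def, ← hK0_def,
      Real.sqrt_mul hK0pos.le, sqrt_exp', harg]
  calc ∫ x : EuclideanSpace ℝ (Fin n),
        Real.sqrt (∫ y, heatKernel n a (x - y) * (heatKernel n b y) ^ 2)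
      = Real.sqrt K0 * (π / β) ^ ((n : ℝ) / 2) := by
        simp only [h1]
        rw [MeasureTheory.integral_const_mul, gauss_int n hβpos]
    _ ≤ 2 ^ ((n : ℝ) / 4) * R ^ ((n : ℝ) / 4) := by
        apply le_of_eq
        rw [← hD_def]
        have hLpos : 0 < Real.sqrt K0 * D ^ ((n : ℝ) / 2) := by positivity
        have hRpos' : (0:ℝ) < 2 ^ ((n : ℝ) / 4) * R ^ ((n : ℝ) / 4) := by positivity
        have hprod : Cb * D ^ 2 = (A * B ^ 2) * (2 * R) := by
          rw [hCb_def, hD_def, hβ_def, hA_def, hB_def, hR_def, ha_def, hb_def]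
          have h1 : (7:ℝ) * t + 4 * r ≠ 0 := by positivity
          have h2 : (2:ℝ) * t + 8 * r ≠ 0 := by positivity
          field_simp
          ring
        have hlog : Real.log Cb + 2 * Real.log D
            = Real.log A + 2 * Real.log B + Real.log 2 + Real.log R := by
          have h := congrArg Real.log hprod
          rw [Real.log_mul hCbpos.ne' (by positivity), Real.log_pow,
            Real.log_mul (by positivity) (by positivity),
            Real.log_mul hApos.ne' (by positivity), Real.log_pow,
            Real.log_mul two_ne_zero hRpos.ne'] at h
          push_cast at h
          linarith
        have key : Real.log (Real.sqrt K0 * D ^ ((n : ℝ) / 2))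
            = Real.log (2 ^ ((n : ℝ) / 4) * R ^ ((n : ℝ) / 4)) := by
          rw [Real.log_mul (Real.sqrt_ne_zero'.2 hK0pos) (by positivity),
            Real.log_mul (by positivity) (by positivity),
            Real.log_sqrt hK0pos.le, hK0_def,
            Real.log_mul (by positivity) (by positivity),
            Real.log_mul (by positivity) (by positivity),
            Real.log_rpow hApos, Real.log_rpow hBpos, Real.log_rpow hCbpos,
            Real.log_rpow hDpos, Real.log_rpow hRpos, Real.log_rpow two_pos]
          linear_combination ((n : ℝ) / 4) * hlog
        calc Real.sqrt K0 * D ^ ((n : ℝ) / 2)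
            = Real.exp (Real.log (Real.sqrt K0 * D ^ ((n : ℝ) / 2))) :=
              (Real.exp_log hLpos).symm
          _ = Real.exp (Real.log (2 ^ ((n : ℝ) / 4) * R ^ ((n : ℝ) / 4))) := by rw [key]
          _ = 2 ^ ((n : ℝ) / 4) * R ^ ((n : ℝ) / 4) := Real.exp_log hRpos'
end

section
/- Let ψ_t(x) := t^{-n/2} ψ(t^{-1/2} x) satisfy the pointwise Gaussian bound |ψ_t(x)| ≤ C₀ G_t(x) for all t > 0 and x ∈ ℝⁿ. Then there exists C depending only on n and C₀ such that for every H¹-atom a (supported in a ball B with ‖a‖_∞ ≤ |B|^{-1} and ∫ a = 0), sup_{t>0} ∫_{ℝⁿ} ( G_{3t/4} ∗ |ψ_{t/4} ∗ a|² )^{1/2}(x) dx ≤ C. -/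
open MeasureTheory Metric Real

/-- The parabolic rescaling `ψ_t(x) = t^{-n/2} ψ(t^{-1/2} x)`. -/
noncomputable def rescale (n : ℕ) (ψ : EuclideanSpace ℝ (Fin n) → ℝ) (t : ℝ)
    (x : EuclideanSpace ℝ (Fin n)) : ℝ :=
  t ^ (-(n : ℝ) / 2) * ψ ((t ^ (-(1 : ℝ) / 2)) • x)

section aux

variable {n : ℕ}

local notation "E" => EuclideanSpace ℝ (Fin n)

lemma gauss_integral0 {c : ℝ} (hc : 0 < c) :
    ∫ z : E, Real.exp (-(c * ‖z‖ ^ 2)) = (π / c) ^ ((n : ℝ) / 2) := by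
  have := GaussianFourier.integral_rexp_neg_mul_sq_norm (V := E) hc
  rw [finrank_euclideanSpace_fin] at this
  simpa [neg_mul] using this

lemma gauss_integrable0 {c : ℝ} (hc : 0 < c) :
    Integrable (fun z : E => Real.exp (-(c * ‖z‖ ^ 2))) := by
  have h := (GaussianFourier.integrable_cexp_neg_mul_sq_norm_add (V := E)
    (b := (c : ℂ)) (by simpa using hc) 0 0).norm
  convert h using 2 with z
  rw [Complex.norm_exp]
  norm_num
  left
  norm_cast

lemma gauss_integrable {c : ℝ} (hc : 0 < c) (m : E) :
    Integrable (fun z : E => Real.exp (-(c * ‖z - m‖ ^ 2))) :=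
  (gauss_integrable0 hc).comp_sub_right m

lemma gauss_integral {c : ℝ} (hc : 0 < c) (m : E) :
    ∫ z : E, Real.exp (-(c * ‖z - m‖ ^ 2)) = (π / c) ^ ((n : ℝ) / 2) := by
  rw [integral_sub_right_eq_self (fun z : E => Real.exp (-(c * ‖z‖ ^ 2))) m]
  exact gauss_integral0 hc

lemma complete_sq {a b : ℝ} (hab : a + b ≠ 0) (x c z : E) :
    a * ‖x - z‖ ^ 2 + b * ‖z - c‖ ^ 2 =
      a * b / (a + b) * ‖x - c‖ ^ 2 +
        (a + b) * ‖z - ((a / (a + b)) • x + (b / (a + b)) • c)‖ ^ 2 := by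
  have h : ∀ v : EuclideanSpace ℝ (Fin n), ‖v‖ ^ 2 = inner ℝ v v := fun v =>
    (real_inner_self_eq_norm_sq v).symm
  rw [h, h, h, h]
  simp only [inner_sub_left, inner_sub_right, inner_add_left, inner_add_right,
    real_inner_smul_left, real_inner_smul_right]
  rw [real_inner_comm z x, real_inner_comm c x, real_inner_comm c z]
  field_simp
  ring

lemma gauss_prod_eq {a b : ℝ} (hab : a + b ≠ 0) (x c : E) (z : E) :
    Real.exp (-(a * ‖x - z‖ ^ 2)) * Real.exp (-(b * ‖z - c‖ ^ 2)) =
      Real.exp (-(a * b / (a + b) * ‖x - c‖ ^ 2)) *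
        Real.exp (-((a + b) * ‖z - ((a / (a + b)) • x + (b / (a + b)) • c)‖ ^ 2)) := by
  rw [← Real.exp_add, ← Real.exp_add, ← neg_add, ← neg_add, complete_sq hab x c z]

lemma gauss_prod_integrable {a b : ℝ} (ha : 0 < a) (hb : 0 < b) (x c : E) :
    Integrable (fun z : E =>
      Real.exp (-(a * ‖x - z‖ ^ 2)) * Real.exp (-(b * ‖z - c‖ ^ 2))) := by
  have hab : (0:ℝ) < a + b := by linarith
  simp_rw [gauss_prod_eq hab.ne' x c]
  exact (gauss_integrable hab _).const_mul _

lemma conv_gauss {a b : ℝ} (ha : 0 < a) (hb : 0 < b) (x c : E) :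
    ∫ z : E, Real.exp (-(a * ‖x - z‖ ^ 2)) * Real.exp (-(b * ‖z - c‖ ^ 2)) =
      (π / (a + b)) ^ ((n : ℝ) / 2) * Real.exp (-(a * b / (a + b) * ‖x - c‖ ^ 2)) := by
  have hab : (0:ℝ) < a + b := by linarith
  simp_rw [gauss_prod_eq hab.ne' x c]
  rw [MeasureTheory.integral_const_mul, gauss_integral hab, mul_comm]

lemma rpow_neg_mul_rpow {A B : ℝ} (hA : 0 < A) (hB : 0 ≤ B) (c : ℝ) :
    A ^ (-c) * B ^ c = (B / A) ^ c := by
  rw [Real.div_rpow hB hA.le, Real.rpow_neg hA.le, mul_comm, div_eq_mul_inv]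

lemma rpow_half_sq {A : ℝ} (hA : 0 ≤ A) :
    A ^ ((n : ℝ) / 2) = (A ^ 2) ^ ((n : ℝ) / 4) := by
  rw [show (n:ℝ)/2 = 2 * ((n:ℝ)/4) by ring, Real.rpow_mul hA,
    show A ^ (2:ℝ) = A ^ 2 from by rw [← Real.rpow_natCast A 2]; norm_num]

end aux

set_option maxHeartbeats 1000000 in
/-- if `ψ_t` satisfies pointwise Gaussian bounds `|ψ_t(x)| ≤ C₀ G_t(x)`, then
there is `C = C(n, C₀)` such that for every `H¹`-atom `a` (supported in a ball `B`,
`‖a‖_∞ ≤ |B|⁻¹`, `∫ a = 0`), one has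
`sup_{t>0} ∫ (G_{3t/4} ∗ |ψ_{t/4} ∗ a|²)^{1/2}(x) dx ≤ C`. -/
theorem stmt3 (n : ℕ) (hn : 1 ≤ n) (ψ : EuclideanSpace ℝ (Fin n) → ℝ) (C₀ : ℝ)
    (hψ : ∀ t : ℝ, 0 < t → ∀ x, |rescale n ψ t x| ≤ C₀ * heatKernel n t x) :
    ∃ C : ℝ, 0 < C ∧ ∀ a : EuclideanSpace ℝ (Fin n) → ℝ, Measurable a →
      (∃ (x₀ : EuclideanSpace ℝ (Fin n)) (r : ℝ), 0 < r ∧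
        (∀ x ∉ ball x₀ r, a x = 0) ∧
        (∀ x, |a x| ≤ ((volume (ball x₀ r)).toReal)⁻¹) ∧
        ∫ x, a x = 0) →
      ∀ t : ℝ, 0 < t →
        ∫ x, Real.sqrt (∫ y, heatKernel n (3 * t / 4) (x - y) *
            (∫ z, rescale n ψ (t / 4) (y - z) * a z) ^ 2) ≤ C := by
  classical
  have hπ : (0:ℝ) < π := Real.pi_pos
  haveI : Nonempty (Fin n) := ⟨⟨0, hn⟩⟩
  set vn : ℝ := (volume (ball (0 : EuclideanSpace ℝ (Fin n)) 1)).toReal with hvn_def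
  have hvn : 0 < vn := by
    refine ENNReal.toReal_pos ?_ ?_
    · exact (measure_ball_pos volume 0 one_pos).ne'
    · exact measure_ball_lt_top.ne
  have hC₀ : 0 ≤ C₀ := by
    have h1 := hψ 1 one_pos 0
    have hpos : 0 < heatKernel n 1 (0 : EuclideanSpace ℝ (Fin n)) := by
      rw [heatKernel]; positivity
    by_contra hC
    push_neg at hC
    have h2 : C₀ * heatKernel n 1 0 < 0 := mul_neg_of_neg_of_pos hC hpos
    linarith [le_trans (abs_nonneg _) h1]
  have hCnn : 0 ≤ C₀ * Real.exp (1/4) * (112 * π ^ 2) ^ ((n:ℝ)/4) / vn :=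
    div_nonneg (mul_nonneg (mul_nonneg hC₀ (Real.exp_nonneg _))
      (Real.rpow_nonneg (by positivity) _)) hvn.le
  refine ⟨C₀ * Real.exp (1/4) * (112 * π ^ 2) ^ ((n:ℝ)/4) / vn + 1, by linarith, ?_⟩
  rintro a ha ⟨x₀, r, hr, hsupp, habd, -⟩ t ht
  have hr2 : (0:ℝ) < r ^ 2 := pow_pos hr 2
  have hu : (0:ℝ) < t + 4 * r ^ 2 := by linarith
  have hw : (0:ℝ) < 7 * t + 4 * r ^ 2 := by linarith
  have hwu : 7 * t + 4 * r ^ 2 ≤ 7 * (t + 4 * r ^ 2) := by linarith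
  set u : ℝ := t + 4 * r ^ 2 with hu_def
  set w : ℝ := 7 * t + 4 * r ^ 2 with hw_def
  -- volume of the ball
  set V : ℝ := (volume (ball x₀ r)).toReal with hV_def
  have hVe : V = r ^ n * vn := by
    rw [hV_def, Measure.addHaar_ball volume x₀ hr.le, finrank_euclideanSpace_fin,
      ENNReal.toReal_mul, ENNReal.toReal_ofReal (pow_nonneg hr.le n)]
  have hV : 0 < V := by rw [hVe]; exact mul_pos (pow_pos hr n) hvn
  set K₁ : ℝ := V⁻¹ * Real.exp (1/4) with hK₁_def
  have hK₁ : 0 < K₁ := mul_pos (inv_pos.mpr hV) (Real.exp_pos _)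
  -- Step A : pointwise Gaussian bound on the atom
  have habound : ∀ z, |a z| ≤ K₁ * Real.exp (-(1/(4*r^2) * ‖z - x₀‖ ^ 2)) := by
    intro z
    by_cases hz : z ∈ ball x₀ r
    · have h1 : |a z| ≤ V⁻¹ := habd z
      have h2 : ‖z - x₀‖ ^ 2 ≤ r ^ 2 := by
        have hd : ‖z - x₀‖ < r := by rw [← dist_eq_norm]; exact mem_ball.mp hz
        nlinarith [norm_nonneg (z - x₀)]
      have h3 : (1:ℝ) ≤ Real.exp (1/4) * Real.exp (-(1/(4*r^2) * ‖z - x₀‖ ^ 2)) := by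
        rw [← Real.exp_add]
        have harg : (0:ℝ) ≤ 1/4 + -(1/(4*r^2) * ‖z - x₀‖ ^ 2) := by
          have : 1/(4*r^2) * ‖z - x₀‖ ^ 2 ≤ 1/4 := by
            rw [div_mul_eq_mul_div, one_mul, div_le_div_iff₀ (by nlinarith) (by norm_num)]
            nlinarith
          linarith
        calc (1:ℝ) = Real.exp 0 := Real.exp_zero.symm
          _ ≤ _ := Real.exp_le_exp.mpr harg
      calc |a z| ≤ V⁻¹ * 1 := by rw [mul_one]; exact h1
        _ ≤ V⁻¹ * (Real.exp (1/4) * Real.exp (-(1/(4*r^2) * ‖z - x₀‖ ^ 2))) :=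
            mul_le_mul_of_nonneg_left h3 (inv_nonneg.mpr hV.le)
        _ = K₁ * Real.exp (-(1/(4*r^2) * ‖z - x₀‖ ^ 2)) := by rw [hK₁_def]; ring
    · rw [hsupp z hz, abs_zero]
      exact mul_nonneg hK₁.le (Real.exp_nonneg _)
  -- rescaled kernel bound at time t/4
  have hψt : ∀ v : EuclideanSpace ℝ (Fin n), |rescale n ψ (t/4) v| ≤
      C₀ * ((π * t) ^ (-(n:ℝ)/2) * Real.exp (-(1/t * ‖v‖ ^ 2))) := by
    intro v
    have h := hψ (t/4) (by linarith) v
    have he : heatKernel n (t/4) v =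
        (π * t) ^ (-(n:ℝ)/2) * Real.exp (-(1/t * ‖v‖ ^ 2)) := by
      rw [heatKernel, show 4 * π * (t/4) = π * t by ring]
      congr 1
      field_simp
    rwa [he] at h
  -- heat kernel at time 3t/4
  have hHK3 : ∀ v : EuclideanSpace ℝ (Fin n), heatKernel n (3*t/4) v =
      (3 * (π * t)) ^ (-(n:ℝ)/2) * Real.exp (-(1/(3*t) * ‖v‖ ^ 2)) := by
    intro v
    rw [heatKernel, show 4 * π * (3*t/4) = 3 * (π * t) by ring]
    congr 1
    field_simp
  have h3πt : (0:ℝ) < 3 * (π * t) := by nlinarith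
  have hπt : (0:ℝ) < π * t := mul_pos hπ ht
  have hA1 : (0:ℝ) < 1/t := div_pos one_pos ht
  have hB1 : (0:ℝ) < 1/(4*r^2) := div_pos one_pos (by nlinarith)
  have hA2 : (0:ℝ) < 1/(3*t) := div_pos one_pos (by nlinarith)
  have hB2 : (0:ℝ) < 2/u := div_pos two_pos hu
  set M : ℝ := C₀ * K₁ * (4*r^2/u) ^ ((n:ℝ)/2) with hM_def
  have h4ru : (0:ℝ) ≤ 4*r^2/u := div_nonneg (by positivity) hu.le
  have hM0 : 0 ≤ M := mul_nonneg (mul_nonneg hC₀ hK₁.le) (Real.rpow_nonneg h4ru _)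
  -- Step B : bound on ψ_{t/4} ∗ a
  have hconst1 : (π * t) ^ (-(n:ℝ)/2) * (π/(1/t + 1/(4*r^2))) ^ ((n:ℝ)/2)
      = (4*r^2/u) ^ ((n:ℝ)/2) := by
    have h1 : π/(1/t + 1/(4*r^2)) = 4*π*t*r^2/u := by
      rw [hu_def]; field_simp; ring
    rw [neg_div, h1, rpow_neg_mul_rpow hπt
      (div_nonneg (by nlinarith [mul_pos hπt hr2] : (0:ℝ) ≤ 4*π*t*r^2) hu.le)]
    congr 1
    field_simp
  have hγ1 : (1/t) * (1/(4*r^2)) / (1/t + 1/(4*r^2)) = 1/u := by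
    rw [hu_def]; field_simp; ring
  have hF : ∀ y, |∫ z, rescale n ψ (t/4) (y - z) * a z| ≤
      M * Real.exp (-(1/u * ‖y - x₀‖ ^ 2)) := by
    intro y
    calc |∫ z, rescale n ψ (t/4) (y - z) * a z|
        ≤ ∫ z, ‖rescale n ψ (t/4) (y - z) * a z‖ := by
          rw [← Real.norm_eq_abs]
          exact norm_integral_le_integral_norm _
      _ ≤ ∫ z, (C₀ * (π * t) ^ (-(n:ℝ)/2) * K₁) *
            (Real.exp (-(1/t * ‖y - z‖ ^ 2)) * Real.exp (-(1/(4*r^2) * ‖z - x₀‖ ^ 2))) := by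
          apply integral_mono_of_nonneg
          · exact Filter.Eventually.of_forall fun z => norm_nonneg _
          · exact (gauss_prod_integrable hA1 hB1 y x₀).const_mul _
          · refine Filter.Eventually.of_forall fun z => ?_
            dsimp only
            rw [Real.norm_eq_abs, abs_mul]
            calc |rescale n ψ (t/4) (y - z)| * |a z|
                ≤ (C₀ * ((π * t) ^ (-(n:ℝ)/2) * Real.exp (-(1/t * ‖y - z‖ ^ 2)))) *
                  (K₁ * Real.exp (-(1/(4*r^2) * ‖z - x₀‖ ^ 2))) :=
                  mul_le_mul (hψt _) (habound z) (abs_nonneg _)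
                    (mul_nonneg hC₀ (mul_nonneg (Real.rpow_nonneg hπt.le _)
                      (Real.exp_nonneg _)))
              _ = _ := by ring
      _ = (C₀ * (π * t) ^ (-(n:ℝ)/2) * K₁) *
            ((π/(1/t + 1/(4*r^2))) ^ ((n:ℝ)/2) *
              Real.exp (-((1/t) * (1/(4*r^2)) / (1/t + 1/(4*r^2)) * ‖y - x₀‖ ^ 2))) := by
          rw [MeasureTheory.integral_const_mul, conv_gauss hA1 hB1 y x₀]
      _ = M * Real.exp (-(1/u * ‖y - x₀‖ ^ 2)) := by
          rw [hγ1, hM_def, ← hconst1]; ring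
  -- Step C : bound on the middle integral
  have hγ2 : (1/(3*t)) * (2/u) / (1/(3*t) + 2/u) = 2/w := by
    rw [hu_def, hw_def]; field_simp; ring
  have hconst2 : (3 * (π * t)) ^ (-(n:ℝ)/2) * (π/(1/(3*t) + 2/u)) ^ ((n:ℝ)/2)
      = (u/w) ^ ((n:ℝ)/2) := by
    have h1 : π/(1/(3*t) + 2/u) = 3*π*t*u/w := by
      rw [hu_def, hw_def]; field_simp; ring
    rw [neg_div, h1, rpow_neg_mul_rpow h3πt
      (div_nonneg (by nlinarith [mul_pos hπt hu] : (0:ℝ) ≤ 3*π*t*u) hw.le)]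
    congr 1
    field_simp
  have hGb : ∀ x : EuclideanSpace ℝ (Fin n), (∫ y, heatKernel n (3*t/4) (x - y) *
        (∫ z, rescale n ψ (t/4) (y - z) * a z) ^ 2) ≤
      M ^ 2 * (u/w) ^ ((n:ℝ)/2) * Real.exp (-(2/w * ‖x - x₀‖ ^ 2)) := by
    intro x
    calc (∫ y, heatKernel n (3*t/4) (x - y) * (∫ z, rescale n ψ (t/4) (y - z) * a z) ^ 2)
        ≤ ∫ y, ((3 * (π * t)) ^ (-(n:ℝ)/2) * M ^ 2) *
            (Real.exp (-(1/(3*t) * ‖x - y‖ ^ 2)) * Real.exp (-(2/u * ‖y - x₀‖ ^ 2))) := by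
          apply integral_mono_of_nonneg
          · refine Filter.Eventually.of_forall fun y => ?_
            dsimp only
            refine mul_nonneg ?_ (sq_nonneg _)
            rw [hHK3]
            exact mul_nonneg (Real.rpow_nonneg h3πt.le _) (Real.exp_nonneg _)
          · exact (gauss_prod_integrable hA2 hB2 x x₀).const_mul _
          · refine Filter.Eventually.of_forall fun y => ?_
            dsimp only
            rw [hHK3 (x - y)]
            have h2 : (∫ z, rescale n ψ (t/4) (y - z) * a z) ^ 2 ≤
                (M * Real.exp (-(1/u * ‖y - x₀‖ ^ 2))) ^ 2 := by
              rw [← sq_abs]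
              exact pow_le_pow_left₀ (abs_nonneg _) (hF y) 2
            have hk0 : (0:ℝ) ≤ (3 * (π * t)) ^ (-(n:ℝ)/2) * Real.exp (-(1/(3*t) * ‖x - y‖ ^ 2)) :=
              mul_nonneg (Real.rpow_nonneg h3πt.le _) (Real.exp_nonneg _)
            calc (3 * (π * t)) ^ (-(n:ℝ)/2) * Real.exp (-(1/(3*t) * ‖x - y‖ ^ 2)) *
                  (∫ z, rescale n ψ (t/4) (y - z) * a z) ^ 2
                ≤ (3 * (π * t)) ^ (-(n:ℝ)/2) * Real.exp (-(1/(3*t) * ‖x - y‖ ^ 2)) *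
                  (M * Real.exp (-(1/u * ‖y - x₀‖ ^ 2))) ^ 2 :=
                  mul_le_mul_of_nonneg_left h2 hk0
              _ = ((3 * (π * t)) ^ (-(n:ℝ)/2) * M ^ 2) *
                  (Real.exp (-(1/(3*t) * ‖x - y‖ ^ 2)) * Real.exp (-(2/u * ‖y - x₀‖ ^ 2))) := by
                  rw [mul_pow, pow_two (Real.exp (-(1/u * ‖y - x₀‖ ^ 2))), ← Real.exp_add,
                    show -(1/u * ‖y - x₀‖ ^ 2) + -(1/u * ‖y - x₀‖ ^ 2)
                      = -(2/u * ‖y - x₀‖ ^ 2) by ring]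
                  ring
      _ = ((3 * (π * t)) ^ (-(n:ℝ)/2) * M ^ 2) *
            ((π/(1/(3*t) + 2/u)) ^ ((n:ℝ)/2) *
              Real.exp (-((1/(3*t)) * (2/u) / (1/(3*t) + 2/u) * ‖x - x₀‖ ^ 2))) := by
          rw [MeasureTheory.integral_const_mul, conv_gauss hA2 hB2 x x₀]
      _ = M ^ 2 * (u/w) ^ ((n:ℝ)/2) * Real.exp (-(2/w * ‖x - x₀‖ ^ 2)) := by
          rw [hγ2, ← hconst2]; ring
  -- Step D : pointwise bound on the square root
  set N : ℝ := M * (u/w) ^ ((n:ℝ)/4) with hN_def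
  have huw : (0:ℝ) ≤ u/w := div_nonneg hu.le hw.le
  have hN0 : 0 ≤ N := mul_nonneg hM0 (Real.rpow_nonneg huw _)
  have hsqrt : ∀ x : EuclideanSpace ℝ (Fin n), Real.sqrt (∫ y, heatKernel n (3*t/4) (x - y) *
        (∫ z, rescale n ψ (t/4) (y - z) * a z) ^ 2) ≤
      N * Real.exp (-(1/w * ‖x - x₀‖ ^ 2)) := by
    intro x
    have h2 : M ^ 2 * (u/w) ^ ((n:ℝ)/2) * Real.exp (-(2/w * ‖x - x₀‖ ^ 2)) =
        (N * Real.exp (-(1/w * ‖x - x₀‖ ^ 2))) ^ 2 := by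
      have e1 : ((u/w) ^ ((n:ℝ)/4)) ^ 2 = (u/w) ^ ((n:ℝ)/2) := by
        rw [← Real.rpow_natCast ((u/w) ^ ((n:ℝ)/4)) 2, ← Real.rpow_mul huw]
        congr 1
        push_cast
        ring
      have e2 : (Real.exp (-(1/w * ‖x - x₀‖ ^ 2))) ^ 2
          = Real.exp (-(2/w * ‖x - x₀‖ ^ 2)) := by
        rw [pow_two, ← Real.exp_add]
        congr 1
        ring
      calc M ^ 2 * (u/w) ^ ((n:ℝ)/2) * Real.exp (-(2/w * ‖x - x₀‖ ^ 2))
          = M ^ 2 * (((u/w) ^ ((n:ℝ)/4)) ^ 2 * (Real.exp (-(1/w * ‖x - x₀‖ ^ 2))) ^ 2) := by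
            rw [e1, e2]
            ring
        _ = (N * Real.exp (-(1/w * ‖x - x₀‖ ^ 2))) ^ 2 := by
            rw [hN_def]
            ring
    calc Real.sqrt (∫ y, heatKernel n (3*t/4) (x - y) *
          (∫ z, rescale n ψ (t/4) (y - z) * a z) ^ 2)
        ≤ Real.sqrt (M ^ 2 * (u/w) ^ ((n:ℝ)/2) * Real.exp (-(2/w * ‖x - x₀‖ ^ 2))) :=
          Real.sqrt_le_sqrt (hGb x)
      _ = N * Real.exp (-(1/w * ‖x - x₀‖ ^ 2)) := by
          rw [h2, Real.sqrt_sq (mul_nonneg hN0 (Real.exp_nonneg _))]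
  -- Step E : integrate
  have h1w : (0:ℝ) < 1/w := div_pos one_pos hw
  have hmain : (∫ x, Real.sqrt (∫ y, heatKernel n (3*t/4) (x - y) *
        (∫ z, rescale n ψ (t/4) (y - z) * a z) ^ 2)) ≤ N * (π * w) ^ ((n:ℝ)/2) := by
    calc (∫ x, Real.sqrt (∫ y, heatKernel n (3*t/4) (x - y) *
          (∫ z, rescale n ψ (t/4) (y - z) * a z) ^ 2))
        ≤ ∫ x, N * Real.exp (-(1/w * ‖x - x₀‖ ^ 2)) := by
          apply integral_mono_of_nonneg
          · exact Filter.Eventually.of_forall fun x => Real.sqrt_nonneg _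
          · exact (gauss_integrable h1w x₀).const_mul N
          · exact Filter.Eventually.of_forall hsqrt
      _ = N * (π/(1/w)) ^ ((n:ℝ)/2) := by
          rw [MeasureTheory.integral_const_mul, gauss_integral h1w]
      _ = N * (π * w) ^ ((n:ℝ)/2) := by
          rw [show π/(1/w) = π * w by field_simp]
  -- Step F : the final numeric bound
  have hX : (4*r^2/u) ^ ((n:ℝ)/2) * (u/w) ^ ((n:ℝ)/4) * (π * w) ^ ((n:ℝ)/2)
      = (16 * π^2 * r^4 * (w/u)) ^ ((n:ℝ)/4) := by
    rw [rpow_half_sq h4ru, rpow_half_sq (mul_nonneg hπ.le hw.le),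
      ← Real.mul_rpow (sq_nonneg _) huw,
      ← Real.mul_rpow (mul_nonneg (sq_nonneg _) huw) (sq_nonneg _)]
    congr 1
    field_simp
    ring
  have hX2 : (16 * π^2 * r^4 * (w/u)) ^ ((n:ℝ)/4) ≤ (112 * π^2) ^ ((n:ℝ)/4) * r ^ n := by
    have h7 : w/u ≤ 7 := (div_le_iff₀ hu).mpr (by linarith)
    have h0 : (0:ℝ) ≤ 16 * π^2 * r^4 := by positivity
    have h1 : 16 * π^2 * r^4 * (w/u) ≤ 112 * π^2 * r^4 := by
      have := mul_le_mul_of_nonneg_left h7 h0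
      linarith
    calc (16 * π^2 * r^4 * (w/u)) ^ ((n:ℝ)/4)
        ≤ (112 * π^2 * r^4) ^ ((n:ℝ)/4) :=
          Real.rpow_le_rpow (mul_nonneg h0 (div_nonneg hw.le hu.le)) h1 (by positivity)
      _ = (112 * π^2) ^ ((n:ℝ)/4) * r ^ n := by
          rw [Real.mul_rpow (by positivity) (by positivity)]
          congr 1
          rw [← Real.rpow_natCast r 4, ← Real.rpow_mul hr.le,
            show ((4:ℕ):ℝ) * ((n:ℝ)/4) = (n:ℝ) by push_cast; ring, Real.rpow_natCast]
  have hfinal : N * (π * w) ^ ((n:ℝ)/2) ≤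
      C₀ * Real.exp (1/4) * (112 * π^2) ^ ((n:ℝ)/4) / vn := by
    have hNe : N * (π * w) ^ ((n:ℝ)/2) =
        C₀ * K₁ * ((4*r^2/u) ^ ((n:ℝ)/2) * (u/w) ^ ((n:ℝ)/4) * (π * w) ^ ((n:ℝ)/2)) := by
      rw [hN_def, hM_def]; ring
    rw [hNe, hX]
    calc C₀ * K₁ * (16 * π^2 * r^4 * (w/u)) ^ ((n:ℝ)/4)
        ≤ C₀ * K₁ * ((112 * π^2) ^ ((n:ℝ)/4) * r ^ n) :=
          mul_le_mul_of_nonneg_left hX2 (mul_nonneg hC₀ hK₁.le)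
      _ = C₀ * Real.exp (1/4) * (112 * π^2) ^ ((n:ℝ)/4) / vn := by
          rw [hK₁_def, hVe]
          have hrn : (r:ℝ) ^ n ≠ 0 := pow_ne_zero n hr.ne'
          field_simp
  linarith [hmain, hfinal]
end

section
/- For any measurable functions u, v on (0,∞)×ℝⁿ and β ∈ ℝ, one has ∫_0^∞ ∫_{ℝⁿ} |u(t,y)||v(t,y)| dt dy ≤ C ‖u‖_{T^{∞,1}_β} ‖v‖_{T^{1,∞}_{−β}}, where C depends only on n. -/
open MeasureTheory Metric Real ENNReal

lemma layercake_pt (c : ℝ≥0∞) :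
    ∫⁻ ℓ in Set.Ioi (0:ℝ), Set.indicator {ℓ : ℝ | ENNReal.ofReal ℓ < c} (fun _ => 1) ℓ = c := by
  have hms : MeasurableSet {ℓ : ℝ | ENNReal.ofReal ℓ < c} :=
    measurableSet_lt (ENNReal.measurable_ofReal.comp measurable_id) measurable_const
  rw [lintegral_indicator hms, setLIntegral_one, Measure.restrict_apply hms]
  rcases eq_or_ne c ⊤ with rfl | hc
  · have : {ℓ : ℝ | ENNReal.ofReal ℓ < ⊤} = Set.univ := by
      ext ℓ; simp [ENNReal.ofReal_lt_top]
    rw [this, Set.univ_inter, Real.volume_Ioi]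
  · have : {ℓ : ℝ | ENNReal.ofReal ℓ < c} ∩ Set.Ioi 0 = Set.Ioo 0 c.toReal := by
      ext ℓ
      simp only [Set.mem_inter_iff, Set.mem_setOf_eq, Set.mem_Ioi, Set.mem_Ioo]
      constructor
      · rintro ⟨h1, h2⟩
        exact ⟨h2, (ENNReal.ofReal_lt_iff_lt_toReal h2.le hc).mp h1⟩
      · rintro ⟨h1, h2⟩
        exact ⟨(ENNReal.ofReal_lt_iff_lt_toReal h1.le hc).mpr h2, h1⟩
    rw [this, Real.volume_Ioo, sub_zero, ENNReal.ofReal_toReal hc]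

lemma layercake {α : Type*} [MeasurableSpace α] (μ : Measure α) [SFinite μ]
    (w g : α → ℝ≥0∞) (hw : Measurable w) (hg : Measurable g) :
    ∫⁻ a, w a * g a ∂μ =
      ∫⁻ ℓ in Set.Ioi (0:ℝ), ∫⁻ a,
        w a * Set.indicator {a | ENNReal.ofReal ℓ < g a} (fun _ => 1) a ∂μ := by
  have h1 : ∀ a, w a * g a =
      ∫⁻ ℓ in Set.Ioi (0:ℝ), w a * Set.indicator {ℓ : ℝ | ENNReal.ofReal ℓ < g a} (fun _ => 1) ℓ := by
    intro a
    rw [lintegral_const_mul, layercake_pt]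
    exact Measurable.indicator measurable_const
      (measurableSet_lt (ENNReal.measurable_ofReal.comp measurable_id) measurable_const)
  have hmeas : Measurable (Function.uncurry fun a (ℓ : ℝ) =>
      w a * Set.indicator {ℓ : ℝ | ENNReal.ofReal ℓ < g a} (fun _ => 1) ℓ) := by
    have : Function.uncurry (fun a (ℓ : ℝ) =>
        w a * Set.indicator {ℓ : ℝ | ENNReal.ofReal ℓ < g a} (fun _ => 1) ℓ)
        = fun q : α × ℝ => w q.1 * Set.indicator {q : α × ℝ | ENNReal.ofReal q.2 < g q.1}
            (fun _ => 1) q := by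
      ext q
      simp only [Function.uncurry, Set.indicator_apply, Set.mem_setOf_eq]
    rw [this]
    refine (hw.comp measurable_fst).mul ?_
    exact Measurable.indicator measurable_const
      (measurableSet_lt (measurable_snd.ennreal_ofReal) (hg.comp measurable_fst))
  calc ∫⁻ a, w a * g a ∂μ
      = ∫⁻ a, (∫⁻ ℓ in Set.Ioi (0:ℝ),
          w a * Set.indicator {ℓ : ℝ | ENNReal.ofReal ℓ < g a} (fun _ => 1) ℓ) ∂μ := by
        exact lintegral_congr h1
    _ = ∫⁻ ℓ in Set.Ioi (0:ℝ), ∫⁻ a,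
          w a * Set.indicator {a | ENNReal.ofReal ℓ < g a} (fun _ => 1) a ∂μ := by
        refine lintegral_lintegral_swap hmeas.aemeasurable |>.trans ?_
        refine lintegral_congr fun ℓ => lintegral_congr fun a => ?_
        simp only [Set.indicator_apply, Set.mem_setOf_eq]

lemma gammaSet_meas (n : ℕ) :
    MeasurableSet {z : (EuclideanSpace ℝ (Fin n)) × ℝ × (EuclideanSpace ℝ (Fin n)) | 0 < z.2.1 ∧ dist z.2.2 z.1 < Real.sqrt z.2.1} := by
  refine (IsOpen.measurableSet ?_)
  refine IsOpen.inter ?_ ?_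
  · exact isOpen_lt continuous_const (continuous_fst.comp continuous_snd)
  · exact isOpen_lt (Continuous.dist (continuous_snd.comp continuous_snd) continuous_fst)
      (Real.continuous_sqrt.comp (continuous_fst.comp continuous_snd))

lemma measurable_N (n : ℕ) (f : ℝ × (EuclideanSpace ℝ (Fin n)) → ℝ≥0∞) (hf : Measurable f) :
    Measurable (fun x : EuclideanSpace ℝ (Fin n) => essSup f
      ((volume : Measure (ℝ × (EuclideanSpace ℝ (Fin n)))).restrict
        {p : ℝ × (EuclideanSpace ℝ (Fin n)) | 0 < p.1 ∧ dist p.2 x < Real.sqrt p.1})) := by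
  set P : Measure (ℝ × (EuclideanSpace ℝ (Fin n))) := volume with hP
  set N : (EuclideanSpace ℝ (Fin n)) → ℝ≥0∞ := fun x => essSup f
      (P.restrict {p : ℝ × (EuclideanSpace ℝ (Fin n)) | 0 < p.1 ∧ dist p.2 x < Real.sqrt p.1}) with hN
  have hslice : ∀ (q : ℚ) (x : EuclideanSpace ℝ (Fin n)), MeasurableSet
      {z : (EuclideanSpace ℝ (Fin n)) × ℝ × (EuclideanSpace ℝ (Fin n)) | (0 < z.2.1 ∧ dist z.2.2 z.1 < Real.sqrt z.2.1) ∧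
        ENNReal.ofReal (q:ℝ) < f z.2} :=
    fun q x => (gammaSet_meas n).inter
      ((hf.comp measurable_snd) measurableSet_Ioi)
  have hg : ∀ q : ℚ, Measurable (fun x : EuclideanSpace ℝ (Fin n) =>
      P {p : ℝ × (EuclideanSpace ℝ (Fin n)) | (0 < p.1 ∧ dist p.2 x < Real.sqrt p.1) ∧
        ENNReal.ofReal (q:ℝ) < f p}) := by
    intro q
    exact measurable_measure_prodMk_left (hslice q 0)
  apply measurable_of_Ioi
  intro a
  have key : ∀ x : EuclideanSpace ℝ (Fin n), a < N x ↔ ∃ q : ℚ, a < ENNReal.ofReal (q:ℝ) ∧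
      0 < P {p : ℝ × (EuclideanSpace ℝ (Fin n)) | (0 < p.1 ∧ dist p.2 x < Real.sqrt p.1) ∧
        ENNReal.ofReal (q:ℝ) < f p} := by
    intro x
    set Γ : Set (ℝ × (EuclideanSpace ℝ (Fin n))) := {p : ℝ × (EuclideanSpace ℝ (Fin n)) | 0 < p.1 ∧ dist p.2 x < Real.sqrt p.1} with hΓ
    have hrw : ∀ c : ℝ≥0∞,
        P {p : ℝ × (EuclideanSpace ℝ (Fin n)) | (0 < p.1 ∧ dist p.2 x < Real.sqrt p.1) ∧ c < f p}
          = (P.restrict Γ) {p | c < f p} := by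
      intro c
      rw [Measure.restrict_apply (measurableSet_lt measurable_const hf)]
      congr 1
      ext p
      simp only [Set.mem_inter_iff, Set.mem_setOf_eq, hΓ]
      tauto
    constructor
    · intro hax
      obtain ⟨q, hq0, haq, hqN⟩ := ENNReal.lt_iff_exists_rat_btwn.mp hax
      have hofq : ((Real.toNNReal (q:ℝ)) : ℝ≥0∞) = ENNReal.ofReal (q:ℝ) := rfl
      rw [hofq] at haq hqN
      refine ⟨q, haq, ?_⟩
      rw [hrw]
      by_contra h0
      push_neg at h0
      have h0' : (P.restrict Γ) {p | ENNReal.ofReal (q:ℝ) < f p} = 0 := le_antisymm h0 (zero_le)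
      have hae' : ∀ᵐ p ∂(P.restrict Γ), f p ≤ ENNReal.ofReal (q:ℝ) := by
        rw [ae_iff]
        convert h0' using 2
        ext p
        simp [not_le]
      have : N x ≤ ENNReal.ofReal (q:ℝ) := essSup_le_of_ae_le _ hae'
      exact absurd hqN (not_lt.mpr this)
    · rintro ⟨q, haq, hpos⟩
      refine lt_of_lt_of_le haq ?_
      by_contra hlt
      push_neg at hlt
      have hae : ∀ᵐ p ∂(P.restrict Γ), f p ≤ N x := ENNReal.ae_le_essSup f
      have hsub : {p : ℝ × (EuclideanSpace ℝ (Fin n)) | ENNReal.ofReal (q:ℝ) < f p}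
          ⊆ {p : ℝ × (EuclideanSpace ℝ (Fin n)) | ¬ f p ≤ N x} := by
        intro p hp
        simp only [Set.mem_setOf_eq, not_le] at hp ⊢
        exact hlt.trans hp
      have : (P.restrict Γ) {p | ENNReal.ofReal (q:ℝ) < f p} = 0 :=
        measure_mono_null hsub (ae_iff.mp hae)
      rw [hrw] at hpos
      exact absurd this hpos.ne'
  have : N ⁻¹' Set.Ioi a = ⋃ q : ℚ, ({x : EuclideanSpace ℝ (Fin n) | a < ENNReal.ofReal (q:ℝ)} ∩
      {x : EuclideanSpace ℝ (Fin n) | 0 < P {p : ℝ × (EuclideanSpace ℝ (Fin n)) | (0 < p.1 ∧ dist p.2 x < Real.sqrt p.1) ∧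
        ENNReal.ofReal (q:ℝ) < f p}}) := by
    ext x
    simp only [Set.mem_preimage, Set.mem_Ioi, Set.mem_iUnion, Set.mem_inter_iff,
      Set.mem_setOf_eq, key x]
  rw [this]
  exact MeasurableSet.iUnion fun q => (MeasurableSet.const _).inter
    (measurableSet_lt measurable_const (hg q))

lemma cover_bound (n : ℕ) (hn : 1 ≤ n) (O : Set (EuclideanSpace ℝ (Fin n))) (hO : MeasurableSet O)
    (hOfin : volume O ≠ ⊤) (F : ℝ × (EuclideanSpace ℝ (Fin n)) → ℝ≥0∞) (A : ℝ≥0∞)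
    (hbox : ∀ (x : EuclideanSpace ℝ (Fin n)) (r : ℝ), 0 < r →
      ∫⁻ p in Set.Ioo (0:ℝ) (r^2) ×ˢ ball x r, F p ∂(volume : Measure (ℝ × (EuclideanSpace ℝ (Fin n))))
        ≤ A * volume (ball x r)) :
    ∫⁻ p, Set.indicator {p : ℝ × (EuclideanSpace ℝ (Fin n)) | 0 < p.1 ∧ volume (ball p.2 (Real.sqrt p.1) \ O) = 0} F p
      ∂(volume : Measure (ℝ × (EuclideanSpace ℝ (Fin n)))) ≤ ENNReal.ofReal (6^n) * A * volume O := by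
  haveI : Nontrivial (EuclideanSpace ℝ (Fin n)) := by
    apply Module.nontrivial_of_finrank_pos (R := ℝ)
    rw [finrank_euclideanSpace_fin]
    omega
  set c := volume (ball (0 : EuclideanSpace ℝ (Fin n)) 1) with hc
  have hc0 : c ≠ 0 := (measure_ball_pos volume _ one_pos).ne'
  have hctop : c ≠ ⊤ := measure_ball_lt_top.ne
  obtain ⟨k, hk⟩ := ENNReal.exists_nat_gt
    (show volume O / c ≠ ⊤ from (ENNReal.div_lt_top hOfin hc0).ne)
  have hOk : volume O < k * c := by
    rw [ENNReal.div_lt_iff (Or.inl hc0) (Or.inl hctop)] at hk; exact hk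
  set R : ℝ := max k 1 with hRdef
  have hR1 : (1:ℝ) ≤ R := le_max_right _ _
  have hball_vol : ∀ (y : EuclideanSpace ℝ (Fin n)) (r : ℝ), 0 ≤ r →
      volume (ball y r) = ENNReal.ofReal (r ^ n) * c := by
    intro y r hr
    rw [hc, Measure.addHaar_ball volume y hr, finrank_euclideanSpace_fin]
  set D : (EuclideanSpace ℝ (Fin n)) → Set ℝ := fun y => {r | volume (ball y r \ O) = 0} with hD
  have hD0 : ∀ y, (0:ℝ) ∈ D y := fun y => by simp [hD, Metric.ball_zero]
  have hDR : ∀ y, ∀ r ∈ D y, r ≤ R := by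
    intro y r hr
    by_contra hltr
    push_neg at hltr
    have h1r : (1:ℝ) ≤ r := le_trans hR1 hltr.le
    have hkr : (k:ℝ) ≤ r ^ n := by
      calc (k:ℝ) ≤ R := le_max_left _ _
        _ ≤ r := hltr.le
        _ ≤ r ^ n := le_self_pow₀ h1r (by omega)
    have hvol : volume (ball y r) ≤ volume O := by
      calc volume (ball y r) ≤ volume (ball y r ∩ O) + volume (ball y r \ O) :=
            measure_le_inter_add_diff _ _ _
        _ = volume (ball y r ∩ O) := by rw [hr, add_zero]
        _ ≤ volume O := measure_mono Set.inter_subset_right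
    have hle : (k:ℝ≥0∞) * c ≤ volume (ball y r) := by
      rw [hball_vol y r (by linarith)]
      gcongr
      rw [← ENNReal.ofReal_natCast]
      exact ENNReal.ofReal_le_ofReal hkr
    exact absurd (lt_of_lt_of_le hOk (hle.trans hvol)) (lt_irrefl _)
  have hDne : ∀ y, (D y).Nonempty := fun y => ⟨0, hD0 y⟩
  have hDbdd : ∀ y, BddAbove (D y) := fun y => ⟨R, fun r hr => hDR y r hr⟩
  set d : (EuclideanSpace ℝ (Fin n)) → ℝ := fun y => sSup (D y) with hd
  have hd0 : ∀ y, 0 ≤ d y := fun y => le_csSup (hDbdd y) (hD0 y)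
  have hdR : ∀ y, d y ≤ R := fun y => csSup_le (hDne y) (hDR y)
  have hmem : ∀ y r, volume (ball y r \ O) = 0 → r ≤ d y := fun y r h => le_csSup (hDbdd y) h
  have hltd : ∀ y r, r < d y → volume (ball y r \ O) = 0 := by
    intro y r hr
    obtain ⟨s, hs, hrs⟩ := exists_lt_of_lt_csSup (hDne y) hr
    exact measure_mono_null (Set.diff_subset_diff_left (Metric.ball_subset_ball hrs.le)) hs
  have hlip : ∀ y z, d y ≤ dist y z + d z := by
    intro y z
    refine csSup_le (hDne y) (fun r hr => ?_)
    rcases le_or_gt r (dist y z) with h | h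
    · linarith [hd0 z]
    · have hz : volume (ball z (r - dist y z) \ O) = 0 := by
        refine measure_mono_null (Set.diff_subset_diff_left ?_) hr
        intro w hw
        rw [mem_ball] at hw ⊢
        calc dist w y ≤ dist w z + dist z y := dist_triangle _ _ _
          _ < (r - dist y z) + dist z y := by linarith
          _ = r := by rw [dist_comm z y]; ring
      linarith [hmem z _ hz]
  have hdball : ∀ y, volume (ball y (d y) \ O) = 0 := by
    intro y
    have hsub : ball y (d y) \ O ⊆ ⋃ q : ℚ, (if (q:ℝ) < d y then ball y (q:ℝ) \ O else ∅) := by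
      rintro w ⟨hw, hwO⟩
      obtain ⟨q, hq1, hq2⟩ := exists_rat_btwn (mem_ball.mp hw)
      refine Set.mem_iUnion.mpr ⟨q, ?_⟩
      rw [if_pos hq2]
      exact ⟨mem_ball.mpr hq1, hwO⟩
    refine measure_mono_null hsub (measure_iUnion_null fun q => ?_)
    split_ifs with h
    · exact hltd y q h
    · exact measure_empty
  set U : Set (EuclideanSpace ℝ (Fin n)) := {y | 0 < d y} with hU
  obtain ⟨uS, huSsub, hdisj, hcov⟩ :=
    Vitali.exists_disjoint_subfamily_covering_enlargement_closedBall U id d R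
      (fun y _ => hdR y) 4 (by norm_num)
  have hdUpos : ∀ i ∈ uS, 0 < d i := fun i hi => huSsub hi
  haveI hcnt : Countable ↥uS := by
    have hposvol : ∀ i : ↥uS, 0 < volume (closedBall (i : EuclideanSpace ℝ (Fin n)) (d i)) := fun i =>
      lt_of_lt_of_le (measure_ball_pos volume _ (hdUpos i i.2))
        (measure_mono ball_subset_closedBall)
    have hcount := Measure.countable_meas_pos_of_disjoint_iUnion
      (μ := (volume : Measure (EuclideanSpace ℝ (Fin n)))) (As := fun i : ↥uS => closedBall (i : EuclideanSpace ℝ (Fin n)) (d i))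
      (fun _ => measurableSet_closedBall)
      (fun i j hij => hdisj i.2 j.2 (fun h => hij (Subtype.ext h)))
    rw [show {i : ↥uS | 0 < volume (closedBall (i : EuclideanSpace ℝ (Fin n)) (d i))} = Set.univ from Set.eq_univ_of_forall hposvol] at hcount  -- maybe needs massaging
    exact Set.countable_univ_iff.mp hcount
  set Box : ↥uS → Set (ℝ × (EuclideanSpace ℝ (Fin n))) :=
    fun i => Set.Ioo (0:ℝ) ((6 * d i)^2) ×ˢ ball (i : EuclideanSpace ℝ (Fin n)) (6 * d i) with hBox
  have hregion : {p : ℝ × (EuclideanSpace ℝ (Fin n)) | 0 < p.1 ∧ volume (ball p.2 (Real.sqrt p.1) \ O) = 0}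
      ⊆ ⋃ i, Box i := by
    rintro p ⟨hp1, hp2⟩
    have hsq : Real.sqrt p.1 ≤ d p.2 := hmem _ _ hp2
    have hsq0 : 0 < Real.sqrt p.1 := Real.sqrt_pos.mpr hp1
    have hpU : p.2 ∈ U := lt_of_lt_of_le hsq0 hsq
    obtain ⟨b, hbu, hbsub⟩ := hcov p.2 hpU
    have hdb : 0 < d b := hdUpos b hbu
    have hdistb : dist p.2 b ≤ 4 * d b := by
      have h1 := hbsub (mem_closedBall_self (hd0 p.2))
      simpa using (mem_closedBall.mp h1)
    have hdp : d p.2 ≤ 5 * d b := by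
      calc d p.2 ≤ dist p.2 b + d b := hlip p.2 b
        _ ≤ 4 * d b + d b := by linarith
        _ = 5 * d b := by ring
    refine Set.mem_iUnion.mpr ⟨⟨b, hbu⟩, ?_⟩
    refine Set.mem_prod.mpr ⟨?_, ?_⟩
    · refine ⟨hp1, ?_⟩
      have h1 : p.1 = (Real.sqrt p.1)^2 := (Real.sq_sqrt hp1.le).symm
      rw [h1]
      have h2 : Real.sqrt p.1 ≤ 5 * d b := hsq.trans hdp
      calc (Real.sqrt p.1)^2 ≤ (5 * d b)^2 := by nlinarith
        _ < (6 * d b)^2 := by nlinarith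
    · rw [mem_ball]
      calc dist p.2 b ≤ 4 * d b := hdistb
        _ < 6 * d b := by nlinarith
  have hBoxMeas : MeasurableSet (⋃ i, Box i) :=
    MeasurableSet.iUnion fun i => measurableSet_Ioo.prod measurableSet_ball
  have hsum_balls : ∑' i : ↥uS, volume (ball (i : EuclideanSpace ℝ (Fin n)) (6 * d i))
      ≤ ENNReal.ofReal (6^n) * volume O := by
    have h1 : ∀ i : ↥uS, volume (ball (i : EuclideanSpace ℝ (Fin n)) (6 * d i))
        = ENNReal.ofReal ((6:ℝ)^n) * volume (ball (i : EuclideanSpace ℝ (Fin n)) (d i)) := by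
      intro i
      rw [hball_vol _ _ (by have := hd0 (i : EuclideanSpace ℝ (Fin n)); linarith), hball_vol _ _ (hd0 _), mul_pow,
        ENNReal.ofReal_mul (by positivity), mul_assoc]
    have h2 : ∀ i : ↥uS, volume (ball (i : EuclideanSpace ℝ (Fin n)) (d i))
        ≤ volume (closedBall (i : EuclideanSpace ℝ (Fin n)) (d i) ∩ O) := by
      intro i
      calc volume (ball (i : EuclideanSpace ℝ (Fin n)) (d i))
          ≤ volume (ball (i : EuclideanSpace ℝ (Fin n)) (d i) ∩ O) + volume (ball (i : EuclideanSpace ℝ (Fin n)) (d i) \ O) :=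
            measure_le_inter_add_diff _ _ _
        _ = volume (ball (i : EuclideanSpace ℝ (Fin n)) (d i) ∩ O) := by rw [hdball, add_zero]
        _ ≤ volume (closedBall (i : EuclideanSpace ℝ (Fin n)) (d i) ∩ O) := by
            exact measure_mono (Set.inter_subset_inter_left _ ball_subset_closedBall)
    have h3 : ∑' i : ↥uS, volume (closedBall (i : EuclideanSpace ℝ (Fin n)) (d i) ∩ O) ≤ volume O := by
      have hdisj' : Pairwise (Function.onFun Disjoint
          (fun i : ↥uS => closedBall (i : EuclideanSpace ℝ (Fin n)) (d i) ∩ O)) := by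
        intro i j hij
        exact (hdisj i.2 j.2 (fun h => hij (Subtype.ext h))).mono
          Set.inter_subset_left Set.inter_subset_left
      have hmeas' : ∀ i : ↥uS, MeasurableSet (closedBall (i : EuclideanSpace ℝ (Fin n)) (d i) ∩ O) :=
        fun i => measurableSet_closedBall.inter hO
      have heq := measure_iUnion (μ := (volume : Measure (EuclideanSpace ℝ (Fin n)))) hdisj' hmeas'
      rw [← heq]
      exact measure_mono (Set.iUnion_subset fun i => Set.inter_subset_right)
    calc ∑' i : ↥uS, volume (ball (i : EuclideanSpace ℝ (Fin n)) (6 * d i))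
        = ∑' i : ↥uS, ENNReal.ofReal ((6:ℝ)^n) * volume (ball (i : EuclideanSpace ℝ (Fin n)) (d i)) := tsum_congr h1
      _ = ENNReal.ofReal ((6:ℝ)^n) * ∑' i : ↥uS, volume (ball (i : EuclideanSpace ℝ (Fin n)) (d i)) :=
          ENNReal.tsum_mul_left
      _ ≤ ENNReal.ofReal ((6:ℝ)^n) * ∑' i : ↥uS, volume (closedBall (i : EuclideanSpace ℝ (Fin n)) (d i) ∩ O) :=
          mul_le_mul_right (ENNReal.tsum_le_tsum h2) _
      _ ≤ ENNReal.ofReal ((6:ℝ)^n) * volume O := mul_le_mul_right h3 _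
  calc ∫⁻ p, Set.indicator
        {p : ℝ × (EuclideanSpace ℝ (Fin n)) | 0 < p.1 ∧ volume (ball p.2 (Real.sqrt p.1) \ O) = 0} F p
        ∂(volume : Measure (ℝ × (EuclideanSpace ℝ (Fin n))))
      ≤ ∫⁻ p, Set.indicator (⋃ i, Box i) F p ∂(volume : Measure (ℝ × (EuclideanSpace ℝ (Fin n)))) :=
        lintegral_mono (fun p =>
          Set.indicator_le_indicator_of_subset hregion (fun _ => zero_le) p)
    _ = ∫⁻ p in ⋃ i, Box i, F p ∂(volume : Measure (ℝ × (EuclideanSpace ℝ (Fin n)))) := lintegral_indicator hBoxMeas F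
    _ ≤ ∑' i : ↥uS, ∫⁻ p in Box i, F p ∂(volume : Measure (ℝ × (EuclideanSpace ℝ (Fin n)))) :=
        lintegral_iUnion_le _ _
    _ ≤ ∑' i : ↥uS, A * volume (ball (i : EuclideanSpace ℝ (Fin n)) (6 * d i)) := by
        refine ENNReal.tsum_le_tsum fun i => ?_
        refine hbox _ _ ?_
        have hpos := hdUpos i i.2
        linarith
    _ = A * ∑' i : ↥uS, volume (ball (i : EuclideanSpace ℝ (Fin n)) (6 * d i)) := ENNReal.tsum_mul_left
    _ ≤ A * (ENNReal.ofReal ((6:ℝ)^n) * volume O) := mul_le_mul_right hsum_balls _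
    _ = ENNReal.ofReal (6^n) * A * volume O := by ring

/-- the parabolic tent-space duality
`∫_0^∞ ∫_{ℝⁿ} |u||v| dt dy ≤ C ‖u‖_{T^{∞,1}_β} ‖v‖_{T^{1,∞}_{−β}}`, with `C = C(n)`,
where `‖u‖_{T^{∞,1}_β} = sup_B ∫_0^{r(B)²} ⨍_B |t^{−β}u|` and
`‖v‖_{T^{1,∞}_{−β}} = ∫_{ℝⁿ} esssup_{t>0, |y−x|<√t} |t^{β}v(t,y)| dx`
(all quantities taken in `ℝ≥0∞`). -/
theorem stmt9 (n : ℕ) (hn : 1 ≤ n) :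
    ∃ C : ℝ≥0∞, C ≠ ⊤ ∧
      ∀ (u v : ℝ → EuclideanSpace ℝ (Fin n) → ℝ) (β : ℝ),
        Measurable (Function.uncurry u) → Measurable (Function.uncurry v) →
        (∫⁻ t in Set.Ioi (0 : ℝ), ∫⁻ y, ENNReal.ofReal (|u t y| * |v t y|))
          ≤ C *
            (⨆ (x₀ : EuclideanSpace ℝ (Fin n)) (r : ℝ) (_ : 0 < r),
              (volume (ball x₀ r))⁻¹ *
                ∫⁻ t in Set.Ioo (0 : ℝ) (r ^ 2), ∫⁻ y in ball x₀ r,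
                  ENNReal.ofReal (t ^ (-β) * |u t y|)) *
            (∫⁻ x, essSup
              (fun p : ℝ × EuclideanSpace ℝ (Fin n) =>
                ENNReal.ofReal (p.1 ^ β * |v p.1 p.2|))
              ((volume : Measure (ℝ × EuclideanSpace ℝ (Fin n))).restrict
                {p | 0 < p.1 ∧ dist p.2 x < Real.sqrt p.1})) := by
  refine ⟨ENNReal.ofReal (6^n), ENNReal.ofReal_ne_top, ?_⟩
  intro u v β hu hv
  set P : Measure (ℝ × EuclideanSpace ℝ (Fin n)) := volume with hP
  set F : ℝ × EuclideanSpace ℝ (Fin n) → ℝ≥0∞ :=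
    fun p => ENNReal.ofReal (p.1 ^ (-β) * |u p.1 p.2|) with hF
  set f : ℝ × EuclideanSpace ℝ (Fin n) → ℝ≥0∞ :=
    fun p => ENNReal.ofReal (p.1 ^ β * |v p.1 p.2|) with hf
  set N : EuclideanSpace ℝ (Fin n) → ℝ≥0∞ := fun x => essSup f
    (P.restrict {p : ℝ × EuclideanSpace ℝ (Fin n) | 0 < p.1 ∧ dist p.2 x < Real.sqrt p.1}) with hN
  set A : ℝ≥0∞ := ⨆ (x₀ : EuclideanSpace ℝ (Fin n)) (r : ℝ) (_ : 0 < r),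
    (volume (ball x₀ r))⁻¹ * ∫⁻ t in Set.Ioo (0:ℝ) (r ^ 2), ∫⁻ y in ball x₀ r,
      ENNReal.ofReal (t ^ (-β) * |u t y|) with hA
  set S : Set (ℝ × EuclideanSpace ℝ (Fin n)) :=
    Set.Ioi (0:ℝ) ×ˢ (Set.univ : Set (EuclideanSpace ℝ (Fin n))) with hSdef
  have hSmeas : MeasurableSet S := measurableSet_Ioi.prod MeasurableSet.univ
  have hFm : Measurable F := ((measurable_fst.pow measurable_const).mul hu.abs).ennreal_ofReal
  have hfm : Measurable f := ((measurable_fst.pow measurable_const).mul hv.abs).ennreal_ofReal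
  have hNm : Measurable N := measurable_N n f hfm
  -- iterated integral to product integral
  have hiter : ∀ (g : ℝ × EuclideanSpace ℝ (Fin n) → ℝ≥0∞), Measurable g →
      ∀ (s : Set ℝ) (t : Set (EuclideanSpace ℝ (Fin n))),
      (∫⁻ a in s, ∫⁻ y in t, g (a, y)) = ∫⁻ p in s ×ˢ t, g p ∂P := by
    intro g hg s t
    rw [hP, Measure.volume_eq_prod, ← Measure.prod_restrict]
    exact (MeasureTheory.lintegral_prod g hg.aemeasurable).symm
  -- box bound
  have hbox : ∀ (x : EuclideanSpace ℝ (Fin n)) (r : ℝ), 0 < r →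
      ∫⁻ p in Set.Ioo (0:ℝ) (r^2) ×ˢ ball x r, F p ∂P ≤ A * volume (ball x r) := by
    intro x r hr
    have h1 : (volume (ball x r))⁻¹ * ∫⁻ t in Set.Ioo (0:ℝ) (r ^ 2), ∫⁻ y in ball x r,
        ENNReal.ofReal (t ^ (-β) * |u t y|) ≤ A := by
      rw [hA]
      exact le_iSup_of_le x (le_iSup_of_le r (le_iSup_of_le hr le_rfl))
    have h2 : (∫⁻ t in Set.Ioo (0:ℝ) (r ^ 2), ∫⁻ y in ball x r,
        ENNReal.ofReal (t ^ (-β) * |u t y|))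
        = ∫⁻ p in Set.Ioo (0:ℝ) (r^2) ×ˢ ball x r, F p ∂P :=
      hiter F hFm _ _
    rw [h2] at h1
    have hb0 : volume (ball x r) ≠ 0 := (measure_ball_pos volume x hr).ne'
    have hbt : volume (ball x r) ≠ ⊤ := measure_ball_lt_top.ne
    calc ∫⁻ p in Set.Ioo (0:ℝ) (r^2) ×ˢ ball x r, F p ∂P
        = volume (ball x r) * ((volume (ball x r))⁻¹
            * ∫⁻ p in Set.Ioo (0:ℝ) (r^2) ×ˢ ball x r, F p ∂P) := by
          rw [← mul_assoc, ENNReal.mul_inv_cancel hb0 hbt, one_mul]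
      _ ≤ volume (ball x r) * A := mul_le_mul_right h1 _
      _ = A * volume (ball x r) := mul_comm _ _
  set w : ℝ × EuclideanSpace ℝ (Fin n) → ℝ≥0∞ := fun p => Set.indicator S F p with hw
  have hwm : Measurable w := hFm.indicator hSmeas
  -- rewrite of the LHS
  have hLHS : (∫⁻ t in Set.Ioi (0:ℝ), ∫⁻ y, ENNReal.ofReal (|u t y| * |v t y|))
      = ∫⁻ p, w p * f p ∂P := by
    have e1 : (∫⁻ t in Set.Ioi (0:ℝ), ∫⁻ y, ENNReal.ofReal (|u t y| * |v t y|))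
        = ∫⁻ p in S, ENNReal.ofReal (|u p.1 p.2| * |v p.1 p.2|) ∂P := by
      have h := hiter (fun p => ENNReal.ofReal (|u p.1 p.2| * |v p.1 p.2|))
        ((hu.abs.mul hv.abs).ennreal_ofReal) (Set.Ioi 0) Set.univ
      rw [Measure.restrict_univ] at h
      exact h
    have e2 : (∫⁻ p in S, ENNReal.ofReal (|u p.1 p.2| * |v p.1 p.2|) ∂P)
        = ∫⁻ p in S, F p * f p ∂P := by
      refine setLIntegral_congr_fun hSmeas ?_
      rintro p ⟨hp1, -⟩
      rw [Set.mem_Ioi] at hp1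
      rw [hF, hf]
      beta_reduce
      rw [← ENNReal.ofReal_mul (mul_nonneg (Real.rpow_nonneg hp1.le _) (abs_nonneg _))]
      congr 1
      have hrw : p.1 ^ (-β) * |u p.1 p.2| * (p.1 ^ β * |v p.1 p.2|)
          = (p.1 ^ (-β) * p.1 ^ β) * (|u p.1 p.2| * |v p.1 p.2|) := by ring
      rw [hrw, ← Real.rpow_add hp1, neg_add_cancel, Real.rpow_zero, one_mul]
    have e3 : (∫⁻ p in S, F p * f p ∂P) = ∫⁻ p, w p * f p ∂P := by
      rw [← lintegral_indicator hSmeas]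
      refine lintegral_congr fun p => ?_
      by_cases hp : p ∈ S
      · simp [hw, Set.indicator_of_mem hp]
      · simp [hw, Set.indicator_of_notMem hp]
    rw [e1, e2, e3]
  -- Fubini a.e. slice property
  have key : ∀ᵐ p ∂P, volume {x : EuclideanSpace ℝ (Fin n) |
      (0 < p.1 ∧ dist p.2 x < Real.sqrt p.1) ∧ N x < f p} = 0 := by
    set Bad' : Set ((EuclideanSpace ℝ (Fin n)) × ℝ × (EuclideanSpace ℝ (Fin n))) :=
      {z | (0 < z.2.1 ∧ dist z.2.2 z.1 < Real.sqrt z.2.1) ∧ N z.1 < f z.2} with hBad'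
    have hBad'm : MeasurableSet Bad' := by
      refine (gammaSet_meas n).inter ?_
      exact measurableSet_lt'.preimage ((hNm.comp measurable_fst).prodMk (hfm.comp measurable_snd))
    have hslices : ∀ x : EuclideanSpace ℝ (Fin n), P (Prod.mk x ⁻¹' Bad') = 0 := by
      intro x
      have hone : Prod.mk x ⁻¹' Bad'
          = {p : ℝ × EuclideanSpace ℝ (Fin n) | N x < f p}
            ∩ {p : ℝ × EuclideanSpace ℝ (Fin n) | 0 < p.1 ∧ dist p.2 x < Real.sqrt p.1} := by
        ext p
        simp only [Set.mem_preimage, hBad', Set.mem_setOf_eq, Set.mem_inter_iff]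
        tauto
      have hms : MeasurableSet {p : ℝ × EuclideanSpace ℝ (Fin n) | N x < f p} :=
        measurableSet_lt measurable_const hfm
      rw [hone, ← Measure.restrict_apply hms]
      have hNx : N x = essSup f (P.restrict
          {p : ℝ × EuclideanSpace ℝ (Fin n) | 0 < p.1 ∧ dist p.2 x < Real.sqrt p.1}) := rfl
      have hae := ENNReal.ae_le_essSup
        (μ := P.restrict {p : ℝ × EuclideanSpace ℝ (Fin n) |
          0 < p.1 ∧ dist p.2 x < Real.sqrt p.1}) f
      rw [ae_iff] at hae
      rw [← hNx] at hae
      convert hae using 2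
      ext p
      simp [not_le]
    have hprod0 : (((volume : Measure (EuclideanSpace ℝ (Fin n)))).prod P) Bad' = 0 := by
      rw [Measure.prod_apply hBad'm]
      simp only [hslices]
      exact lintegral_zero
    have hswap : (P.prod (volume : Measure (EuclideanSpace ℝ (Fin n)))) (Prod.swap ⁻¹' Bad') = 0 := by
      rw [← Measure.prod_swap, Measure.map_apply measurable_swap (hBad'm.preimage measurable_swap)]
      have : Prod.swap ⁻¹' (Prod.swap ⁻¹' Bad') = Bad' := by
        rw [Set.preimage_preimage]
        simp
      rw [this]
      exact hprod0
    have hsw : (volume : Measure ((ℝ × EuclideanSpace ℝ (Fin n)) × EuclideanSpace ℝ (Fin n)))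
        = P.prod (volume : Measure (EuclideanSpace ℝ (Fin n))) := by
      rw [hP, Measure.volume_eq_prod]
    have hae := (Measure.measure_prod_null (μ := P)
      (ν := (volume : Measure (EuclideanSpace ℝ (Fin n))))
      (hBad'm.preimage measurable_swap)).mp hswap
    filter_upwards [hae] with p hp
    exact hp
  rw [hLHS]
  -- Branch A = 0
  rcases eq_or_ne A 0 with hA0 | hApos
  · have hw0 : ∫⁻ p, w p ∂P = 0 := by
      have hcover : S ⊆ ⋃ k : ℕ,
          Set.Ioo (0:ℝ) (((k:ℝ)+1)^2) ×ˢ ball (0 : EuclideanSpace ℝ (Fin n)) ((k:ℝ)+1) := by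
        rintro p ⟨hp1, -⟩
        rw [Set.mem_Ioi] at hp1
        obtain ⟨k, hk⟩ := exists_nat_gt (max p.1 (dist p.2 0))
        have h1 : p.1 < (k:ℝ) := lt_of_le_of_lt (le_max_left _ _) hk
        have h2 : dist p.2 0 < (k:ℝ) := lt_of_le_of_lt (le_max_right _ _) hk
        have hk0 : (0:ℝ) ≤ (k:ℝ) := Nat.cast_nonneg k
        refine Set.mem_iUnion.mpr ⟨k, Set.mem_prod.mpr ⟨⟨hp1, ?_⟩, ?_⟩⟩
        · nlinarith
        · rw [mem_ball]
          linarith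
      have h0 : ∀ k : ℕ, (∫⁻ p in
          Set.Ioo (0:ℝ) (((k:ℝ)+1)^2) ×ˢ ball (0 : EuclideanSpace ℝ (Fin n)) ((k:ℝ)+1),
            F p ∂P) = 0 := by
        intro k
        have := hbox 0 ((k:ℝ)+1) (by positivity)
        rw [hA0, zero_mul] at this
        exact le_antisymm this (zero_le)
      have : ∫⁻ p, w p ∂P ≤ ∑' k : ℕ, (∫⁻ p in
          Set.Ioo (0:ℝ) (((k:ℝ)+1)^2) ×ˢ ball (0 : EuclideanSpace ℝ (Fin n)) ((k:ℝ)+1),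
            F p ∂P) := by
        calc ∫⁻ p, w p ∂P = ∫⁻ p in S, F p ∂P := by rw [hw, lintegral_indicator hSmeas]
          _ ≤ ∫⁻ p in ⋃ k : ℕ,
              Set.Ioo (0:ℝ) (((k:ℝ)+1)^2) ×ˢ ball (0 : EuclideanSpace ℝ (Fin n)) ((k:ℝ)+1),
                F p ∂P := lintegral_mono_set hcover
          _ ≤ _ := lintegral_iUnion_le _ _
      rw [le_antisymm (this.trans (by simp [h0])) (zero_le)]
    have hwz : w =ᵐ[P] 0 := (lintegral_eq_zero_iff hwm).mp hw0
    have hz : (fun p => w p * f p) =ᵐ[P] 0 := by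
      filter_upwards [hwz] with p hp
      simp [hp]
    rw [lintegral_congr_ae hz]
    simp
  -- Branch ∫ N = 0
  rcases eq_or_ne (∫⁻ x, N x) 0 with hN0 | hNpos
  · have hNz : ∀ᵐ x : EuclideanSpace ℝ (Fin n) ∂volume, N x = 0 := by
      have := (lintegral_eq_zero_iff hNm).mp hN0
      filter_upwards [this] with x hx
      exact hx
    have hNsetz : volume {x : EuclideanSpace ℝ (Fin n) | ¬ N x = 0} = 0 := ae_iff.mp hNz
    have hz : (fun p => w p * f p) =ᵐ[P] 0 := by
      filter_upwards [key] with p hp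
      by_cases hpS : p ∈ S
      · rcases eq_or_ne (f p) 0 with hf0 | hf0
        · simp [hf0]
        · exfalso
          have hp1 : 0 < p.1 := hpS.1
          have hfp : 0 < f p := pos_iff_ne_zero.mpr hf0
          have hsub : ball p.2 (Real.sqrt p.1) ∩ {x | N x = 0}
              ⊆ {x : EuclideanSpace ℝ (Fin n) |
                  (0 < p.1 ∧ dist p.2 x < Real.sqrt p.1) ∧ N x < f p} := by
            rintro x ⟨hx1, hx2⟩
            rw [Set.mem_setOf_eq] at hx2
            refine ⟨⟨hp1, ?_⟩, ?_⟩
            · rw [dist_comm]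
              exact mem_ball.mp hx1
            · rw [hx2]
              exact hfp
          have h1 : volume (ball p.2 (Real.sqrt p.1) ∩ {x | N x = 0}) = 0 :=
            measure_mono_null hsub hp
          have h2 : volume (ball p.2 (Real.sqrt p.1))
              ≤ volume (ball p.2 (Real.sqrt p.1) ∩ {x | N x = 0})
                + volume {x : EuclideanSpace ℝ (Fin n) | ¬ N x = 0} := by
            refine le_trans (measure_le_inter_add_diff volume _ {x | N x = 0}) ?_
            gcongr
            rintro x ⟨-, hx⟩
            exact hx
          rw [h1, hNsetz, add_zero] at h2
          exact absurd (le_antisymm h2 (zero_le))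
            (measure_ball_pos volume _ (Real.sqrt_pos.mpr hp1)).ne'
      · have : w p = 0 := by
          rw [hw]
          exact Set.indicator_of_notMem hpS F
        simp [this]
    rw [lintegral_congr_ae hz]
    simp
  -- Branch A = ⊤
  rcases eq_or_ne A ⊤ with hAtop | hAfin
  · have : ENNReal.ofReal (6^n : ℝ) * A * (∫⁻ x, N x) = ⊤ := by
      rw [hAtop, ENNReal.mul_top (ENNReal.ofReal_pos.mpr (by positivity)).ne',
        ENNReal.top_mul hNpos]
    rw [this]
    exact le_top
  -- Main case
  rw [layercake P w f hwm hfm]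
  have hbound : ∀ ℓ : ℝ,
      (∫⁻ p, w p * Set.indicator {p | ENNReal.ofReal ℓ < f p} (fun _ => 1) p ∂P)
      ≤ ENNReal.ofReal (6^n : ℝ) * A
          * volume {x : EuclideanSpace ℝ (Fin n) | ENNReal.ofReal ℓ < N x} := by
    intro ℓ
    set O : Set (EuclideanSpace ℝ (Fin n)) := {x | ENNReal.ofReal ℓ < N x} with hO
    have hOmeas : MeasurableSet O := hNm measurableSet_Ioi
    rcases eq_or_ne (volume O) ⊤ with hOtop | hOfin
    · rw [hOtop, ENNReal.mul_top (mul_ne_zero (ENNReal.ofReal_pos.mpr (by positivity)).ne' hApos)]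
      exact le_top
    · have step1 : (∫⁻ p, w p * Set.indicator {p | ENNReal.ofReal ℓ < f p} (fun _ => 1) p ∂P)
          ≤ ∫⁻ p, Set.indicator {p : ℝ × EuclideanSpace ℝ (Fin n) |
              0 < p.1 ∧ volume (ball p.2 (Real.sqrt p.1) \ O) = 0} F p ∂P := by
        refine lintegral_mono_ae ?_
        filter_upwards [key] with p hp
        by_cases hpS : p ∈ S
        · by_cases hpf : ENNReal.ofReal ℓ < f p
          · have hp1 : 0 < p.1 := hpS.1
            have hreg : p ∈ {p : ℝ × EuclideanSpace ℝ (Fin n) |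
                0 < p.1 ∧ volume (ball p.2 (Real.sqrt p.1) \ O) = 0} := by
              refine ⟨hp1, ?_⟩
              refine measure_mono_null ?_ hp
              rintro x ⟨hx1, hx2⟩
              have hxN : N x ≤ ENNReal.ofReal ℓ := not_lt.mp hx2
              refine ⟨⟨hp1, ?_⟩, lt_of_le_of_lt hxN hpf⟩
              rw [dist_comm]
              exact mem_ball.mp hx1
            calc w p * Set.indicator {p | ENNReal.ofReal ℓ < f p} (fun _ => 1) p
                ≤ w p * 1 := by
                  refine mul_le_mul_right ?_ _
                  by_cases h : p ∈ {p : ℝ × EuclideanSpace ℝ (Fin n) | ENNReal.ofReal ℓ < f p}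
                  · rw [Set.indicator_of_mem h]
                  · rw [Set.indicator_of_notMem h]
                    exact zero_le
              _ = F p := by
                  rw [mul_one, hw]
                  exact Set.indicator_of_mem hpS F
              _ = _ := (Set.indicator_of_mem hreg F).symm
          · have : Set.indicator {p : ℝ × EuclideanSpace ℝ (Fin n) |
                ENNReal.ofReal ℓ < f p} (fun _ => (1:ℝ≥0∞)) p = 0 :=
              Set.indicator_of_notMem
                (s := {p : ℝ × EuclideanSpace ℝ (Fin n) | ENNReal.ofReal ℓ < f p}) hpf _
            rw [this, mul_zero]
            exact zero_le
        · have : w p = 0 := by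
            rw [hw]
            exact Set.indicator_of_notMem hpS F
          rw [this, zero_mul]
          exact zero_le
      exact step1.trans (cover_bound n hn O hOmeas hOfin F A hbox)
  have hlayerN : (∫⁻ ℓ in Set.Ioi (0:ℝ),
      volume {x : EuclideanSpace ℝ (Fin n) | ENNReal.ofReal ℓ < N x}) = ∫⁻ x, N x := by
    have h := layercake (volume : Measure (EuclideanSpace ℝ (Fin n)))
      (fun _ => 1) N measurable_const hNm
    simp only [one_mul] at h
    have h2 : ∀ ℓ : ℝ, (∫⁻ a : EuclideanSpace ℝ (Fin n),
        Set.indicator {a | ENNReal.ofReal ℓ < N a} (fun _ => 1) a)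
        = volume {x : EuclideanSpace ℝ (Fin n) | ENNReal.ofReal ℓ < N x} := by
      intro ℓ
      rw [lintegral_indicator (show MeasurableSet {a | ENNReal.ofReal ℓ < N a} from
        hNm measurableSet_Ioi), setLIntegral_one]
    rw [h]
    exact lintegral_congr fun ℓ => (h2 ℓ).symm
  calc (∫⁻ ℓ in Set.Ioi (0:ℝ), ∫⁻ p,
        w p * Set.indicator {p | ENNReal.ofReal ℓ < f p} (fun _ => 1) p ∂P)
      ≤ ∫⁻ ℓ in Set.Ioi (0:ℝ), ENNReal.ofReal (6^n : ℝ) * A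
          * volume {x : EuclideanSpace ℝ (Fin n) | ENNReal.ofReal ℓ < N x} :=
        lintegral_mono fun ℓ => hbound ℓ
    _ = ENNReal.ofReal (6^n : ℝ) * A * ∫⁻ ℓ in Set.Ioi (0:ℝ),
          volume {x : EuclideanSpace ℝ (Fin n) | ENNReal.ofReal ℓ < N x} :=
        lintegral_const_mul' _ _ (ENNReal.mul_ne_top ENNReal.ofReal_ne_top hAfin)
    _ = ENNReal.ofReal (6^n : ℝ) * A * ∫⁻ x, N x := by rw [hlayerN]
end
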